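/- Let G = (V, E_1, …, E_k) be a multilayer graph with aggregated edge set E and for e ∈ E let m(e) = |{ ℓ ∈ [k] : e ∈ E_ℓ }|. Then the optimum of MaxMultiLayerSTC on G, i.e., the maximum of Σ_{i∈[k]} |S_i| − d_k(S_1,…,S_k) over all families of labelings S_i ⊆ E_i each fulfilling the STC for E_i, equals the maximum of Σ_{e∈E} x(e)·m(e) over all functions x : E → {0,1} satisfying x({i,j}) + x({i,h}) ≤ 1 for every wedge (i,{j,h}) ∈ 𝒲(E_ℓ) and every ℓ ∈ [k]. -/

import Mathlib

open Finset

/-- A wedge `(v, {u, w})` of an edge set `E`. -/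
def IsWedge {V : Type*} (E : Finset (Sym2 V)) (v u w : V) : Prop :=
  u ≠ v ∧ v ≠ w ∧ u ≠ w ∧ s(u, v) ∈ E ∧ s(v, w) ∈ E ∧ s(u, w) ∉ E

/-- A labeling `S ⊆ E` fulfills the strong triadic closure for `E`. -/
def FulfillsSTC {V : Type*} (E S : Finset (Sym2 V)) : Prop :=
  ∀ u v w : V, u ≠ v → v ≠ w → u ≠ w → s(u, v) ∈ S → s(v, w) ∈ S → s(u, w) ∈ E

/-- `s(e)`: the number of layers in which `e` is labeled strong. -/
def sCount {V : Type*} [DecidableEq V] {k : ℕ} (Ss : Fin k → Finset (Sym2 V))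
    (e : Sym2 V) : ℕ :=
  (Finset.univ.filter fun i => e ∈ Ss i).card

/-- `w(e)`: the number of layers in which `e` is labeled weak. -/
def wCount {V : Type*} [DecidableEq V] {k : ℕ} (Es Ss : Fin k → Finset (Sym2 V))
    (e : Sym2 V) : ℕ :=
  (Finset.univ.filter fun i => e ∈ Es i ∧ e ∉ Ss i).card

/-- `d_k(S_1, …, S_k) = ∑_{e ∈ E, w(e) > 0} s(e)`: the number of disagreements. -/
def disagree {V : Type*} [DecidableEq V] {k : ℕ} (Es Ss : Fin k → Finset (Sym2 V)) : ℕ :=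
  ∑ e ∈ (Finset.univ.biUnion Es).filter (fun e => 0 < wCount Es Ss e), sCount Ss e

/-- `m(e) = |{ℓ ∈ [k] : e ∈ E_ℓ}|`: the number of layers containing `e`. -/
def mlayers {V : Type*} [DecidableEq V] {k : ℕ} (Es : Fin k → Finset (Sym2 V))
    (e : Sym2 V) : ℕ :=
  (Finset.univ.filter fun i => e ∈ Es i).card

section Aux

variable {V : Type*} [DecidableEq V] {k : ℕ}

lemma mem_of_wzero {Es Ss : Fin k → Finset (Sym2 V)} {e : Sym2 V}
    (hw : wCount Es Ss e = 0) {i : Fin k} (hi : e ∈ Es i) : e ∈ Ss i := by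
  by_contra h
  have : i ∈ Finset.univ.filter fun j => e ∈ Es j ∧ e ∉ Ss j :=
    Finset.mem_filter.mpr ⟨Finset.mem_univ i, hi, h⟩
  rw [wCount, Finset.card_eq_zero] at hw
  exact Finset.eq_empty_iff_forall_notMem.mp hw i this

lemma sum_sCount (Es Ss : Fin k → Finset (Sym2 V)) (h : ∀ i, Ss i ⊆ Es i) :
    ∑ e ∈ Finset.univ.biUnion Es, sCount Ss e = ∑ i : Fin k, (Ss i).card := by
  calc ∑ e ∈ Finset.univ.biUnion Es, sCount Ss e
      = ∑ e ∈ Finset.univ.biUnion Es, ∑ i : Fin k, if e ∈ Ss i then 1 else 0 := by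
        refine Finset.sum_congr rfl fun e _ => ?_
        rw [sCount, Finset.card_filter]
    _ = ∑ i : Fin k, ∑ e ∈ Finset.univ.biUnion Es, if e ∈ Ss i then 1 else 0 :=
        Finset.sum_comm
    _ = ∑ i : Fin k, (Ss i).card := by
        refine Finset.sum_congr rfl fun i _ => ?_
        rw [← Finset.card_filter, Finset.filter_mem_eq_inter,
          Finset.inter_eq_right.mpr ((h i).trans
            (Finset.subset_biUnion_of_mem Es (Finset.mem_univ i)))]

lemma obj_eq (Es Ss : Fin k → Finset (Sym2 V)) (h : ∀ i, Ss i ⊆ Es i) :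
    (∑ i : Fin k, (Ss i).card) - disagree Es Ss
      = ∑ e ∈ (Finset.univ.biUnion Es).filter (fun e => wCount Es Ss e = 0),
          sCount Ss e := by
  have hsplit := Finset.sum_filter_add_sum_filter_not (Finset.univ.biUnion Es)
    (fun e => 0 < wCount Es Ss e) (sCount Ss)
  rw [← sum_sCount Es Ss h, ← hsplit, disagree, Nat.add_sub_cancel_left]
  apply Finset.sum_congr _ (fun _ _ => rfl)
  apply Finset.filter_congr
  intro e _
  simp [Nat.pos_iff_ne_zero]

lemma sCount_eq_mlayers {Es Ss : Fin k → Finset (Sym2 V)} (h : ∀ i, Ss i ⊆ Es i)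
    {e : Sym2 V} (hw : wCount Es Ss e = 0) : sCount Ss e = mlayers Es e := by
  unfold sCount mlayers
  congr 1
  apply Finset.filter_congr
  intro i _
  exact ⟨fun hi => h i hi, fun hi => mem_of_wzero hw hi⟩

end Aux

/-- The optimum of MaxMultiLayerSTC equals the optimum of its ILP formulation with
binary variables `x(e)` and constraints `x({u,v}) + x({v,w}) ≤ 1` for every wedge
`(v, {u, w})` of every layer. -/
theorem max_multilayer_stc_eq_ilp {V : Type*} [DecidableEq V] {k : ℕ}
    (Es : Fin k → Finset (Sym2 V)) :
    sSup {n : ℕ | ∃ Ss : Fin k → Finset (Sym2 V),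
        (∀ i, Ss i ⊆ Es i) ∧ (∀ i, FulfillsSTC (Es i) (Ss i)) ∧
        n = (∑ i : Fin k, (Ss i).card) - disagree Es Ss}
      = sSup {n : ℕ | ∃ x : Sym2 V → ℕ, (∀ e, x e ≤ 1) ∧
        (∀ ℓ : Fin k, ∀ v u w : V, IsWedge (Es ℓ) v u w →
          x s(u, v) + x s(v, w) ≤ 1) ∧
        n = ∑ e ∈ Finset.univ.biUnion Es, x e * mlayers Es e} := by
  congr 1
  ext n
  simp only [Set.mem_setOf_eq]
  constructor
  · rintro ⟨Ss, hsub, hstc, rfl⟩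
    refine ⟨fun e => if wCount Es Ss e = 0 then 1 else 0, ?_, ?_, ?_⟩
    · intro e; dsimp only; split <;> simp
    · rintro ℓ v u w ⟨huv, hvw, huw, h1, h2, h3⟩
      by_cases c1 : wCount Es Ss s(u, v) = 0
      · by_cases c2 : wCount Es Ss s(v, w) = 0
        · exact absurd (hstc ℓ u v w huv hvw huw (mem_of_wzero c1 h1)
            (mem_of_wzero c2 h2)) h3
        · simp [c1, c2]
      · by_cases c2 : wCount Es Ss s(v, w) = 0 <;> simp [c1, c2]
    · rw [obj_eq Es Ss hsub, Finset.sum_filter]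
      refine Finset.sum_congr rfl fun e he => ?_
      by_cases c : wCount Es Ss e = 0
      · simp [c, sCount_eq_mlayers hsub c]
      · simp [c]
  · rintro ⟨x, hx1, hconstr, rfl⟩
    refine ⟨fun i => (Es i).filter (fun e => x e = 1),
      fun i => Finset.filter_subset _ _, ?_, ?_⟩
    · intro i u v w huv hvw huw h1 h2
      by_contra h3
      have := hconstr i v u w ⟨huv, hvw, huw, (Finset.mem_filter.mp h1).1,
        (Finset.mem_filter.mp h2).1, h3⟩
      rw [(Finset.mem_filter.mp h1).2, (Finset.mem_filter.mp h2).2] at this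
      omega
    · have hzero : disagree Es (fun i => (Es i).filter (fun e => x e = 1)) = 0 := by
        apply Finset.sum_eq_zero
        intro e he
        rcases Finset.mem_filter.mp he with ⟨_, hw⟩
        have hx0 : x e ≠ 1 := by
          rcases Finset.card_pos.mp hw with ⟨i, hi⟩
          simp only [Finset.mem_filter, Finset.mem_univ, true_and] at hi
          intro h
          exact hi.2 ⟨hi.1, h⟩
        simp [sCount, Finset.mem_filter, hx0]
      rw [hzero, Nat.sub_zero,
        ← sum_sCount Es _ (fun i => Finset.filter_subset _ _)]
      refine Finset.sum_congr rfl fun e _ => ?_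
      rcases Nat.le_one_iff_eq_zero_or_eq_one.mp (hx1 e) with c | c
      · have : x e ≠ 1 := by omega
        simp [sCount, Finset.mem_filter, this, c]
      · simp [sCount, mlayers, Finset.mem_filter, c]
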